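/- Let h > 0 and ν > 1. For λ ∈ (0, 4/h²) define the weighted boundary kernel G_λ : ℤ × ℤ → ℂ by G_λ(n,m) := (1+n²)^{−ν/4}·(1+m²)^{−ν/4} · i·exp(2·i·|n−m|·arcsin((h/2)·√λ)) / (√λ·√(4/h² − λ)). Then for every λ ∈ (0, 4/h²) the family (G_λ(n,m))_{(n,m) ∈ ℤ×ℤ} is square-summable with ∑_{(n,m)} |G_λ(n,m)|² ≤ ( ∑_{n ∈ ℤ} (1+n²)^{−ν/2} )² / (λ·(4/h² − λ)), and the map λ ↦ G_λ from (0, 4/h²) to ℓ²(ℤ × ℤ, ℂ) is continuous (i.e. if λ_j → λ₀ in (0, 4/h²) then ∑_{(n,m)} |G_{λ_j}(n,m) − G_{λ₀}(n,m)|² → 0). -/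

import Mathlib

open Filter

/-- The weighted boundary kernel
`G_λ(n,m) = (1+n²)^{−ν/4}(1+m²)^{−ν/4} · i·e^{2i|n−m|·arcsin((h/2)√λ)}/(√λ·√(4/h²−λ))`. -/
noncomputable def Gker (h ν l : ℝ) (p : ℤ × ℤ) : ℂ :=
  (((1 + (p.1 : ℝ) ^ 2) ^ (-(ν / 4)) : ℝ) : ℂ) * (((1 + (p.2 : ℝ) ^ 2) ^ (-(ν / 4)) : ℝ) : ℂ) *
    (Complex.I * Complex.exp (2 * Complex.I * ((|p.1 - p.2| : ℤ) : ℂ) *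
        ((Real.arcsin (h / 2 * Real.sqrt l) : ℝ) : ℂ)) /
      (((Real.sqrt l : ℝ) : ℂ) * ((Real.sqrt (4 / h ^ 2 - l) : ℝ) : ℂ)))

lemma norm_Gker (h ν l : ℝ) (p : ℤ × ℤ) :
    ‖Gker h ν l p‖ = (1 + (p.1:ℝ)^2) ^ (-(ν/4)) * (1 + (p.2:ℝ)^2) ^ (-(ν/4)) /
      (Real.sqrt l * Real.sqrt (4/h^2 - l)) := by
  have h1 : (0:ℝ) < 1 + (p.1:ℝ)^2 := by positivity
  have h2 : (0:ℝ) < 1 + (p.2:ℝ)^2 := by positivity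
  simp [Gker, map_mul, map_div₀, Complex.norm_exp, Complex.norm_real, Real.norm_eq_abs,
    Complex.mul_re, Complex.mul_im, Complex.I_re, Complex.I_im, Complex.intCast_re,
    Complex.intCast_im, Complex.ofReal_re, Complex.ofReal_im,
    abs_of_nonneg (Real.rpow_nonneg h1.le _), abs_of_nonneg (Real.rpow_nonneg h2.le _),
    abs_of_nonneg (Real.sqrt_nonneg _),
    abs_of_nonneg (Real.sqrt_nonneg l), div_eq_mul_inv, mul_inv, mul_assoc]

lemma wsq_sq (ν x : ℝ) (hx : (0:ℝ) < 1 + x^2) :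
    ((1 + x^2) ^ (-(ν/4)))^2 = (1 + x^2) ^ (-(ν/2)) := by
  rw [sq, ← Real.rpow_add hx]
  ring_nf

lemma summable_w {ν : ℝ} (hν : 1 < ν) :
    Summable fun n : ℤ => (1 + (n:ℝ)^2) ^ (-(ν/2)) := by
  refine Summable.of_norm_bounded_eventually (Real.summable_abs_int_rpow hν) ?_
  rw [Filter.eventually_cofinite]
  apply Set.Finite.subset (Set.finite_singleton (0 : ℤ))
  intro n hn
  simp only [Set.mem_setOf_eq] at hn
  by_contra h0
  apply hn
  have hn0 : (n:ℝ) ≠ 0 := by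
    simp only [Set.mem_singleton_iff] at h0; exact_mod_cast h0
  have hp : (0:ℝ) < (n:ℝ)^2 := by positivity
  have h1 : (0:ℝ) < 1 + (n:ℝ)^2 := by positivity
  have key : (1 + (n:ℝ)^2) ^ (-(ν/2)) ≤ ((n:ℝ)^2) ^ (-(ν/2)) :=
    Real.rpow_le_rpow_of_nonpos hp (by linarith) (by linarith)
  have heq : ((n:ℝ)^2) ^ (-(ν/2)) = |(n:ℝ)| ^ (-ν) := by
    rw [← sq_abs, ← Real.rpow_natCast |(n:ℝ)| 2, ← Real.rpow_mul (abs_nonneg _)]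
    congr 1
    push_cast
    ring
  rw [Real.norm_eq_abs, abs_of_nonneg (Real.rpow_nonneg h1.le _)]
  rw [heq] at key
  exact key

lemma norm_Gker_sq (h ν l : ℝ) (hl : 0 < l) (hl2 : l < 4/h^2) (p : ℤ × ℤ) :
    ‖Gker h ν l p‖^2 = (1 + (p.1:ℝ)^2) ^ (-(ν/2)) * (1 + (p.2:ℝ)^2) ^ (-(ν/2)) /
      (l * (4/h^2 - l)) := by
  have h1 : (0:ℝ) < 1 + (p.1:ℝ)^2 := by positivity
  have h2 : (0:ℝ) < 1 + (p.2:ℝ)^2 := by positivity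
  rw [norm_Gker, div_pow, mul_pow, mul_pow, wsq_sq ν _ h1, wsq_sq ν _ h2,
    Real.sq_sqrt hl.le, Real.sq_sqrt (by linarith : (0:ℝ) ≤ 4/h^2 - l)]

/-- For each `λ ∈ (0, 4/h²)` the weighted boundary kernel `G_λ` is
square-summable with the explicit bound, and `λ ↦ G_λ` is continuous into `ℓ²(ℤ×ℤ, ℂ)`. -/
theorem stmt_19 (h ν : ℝ) (hh : 0 < h) (hν : 1 < ν) :
    (∀ l ∈ Set.Ioo (0 : ℝ) (4 / h ^ 2),
      Summable (fun p : ℤ × ℤ => ‖Gker h ν l p‖ ^ 2) ∧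
      ∑' p : ℤ × ℤ, ‖Gker h ν l p‖ ^ 2 ≤
        (∑' n : ℤ, (1 + (n : ℝ) ^ 2) ^ (-(ν / 2))) ^ 2 / (l * (4 / h ^ 2 - l))) ∧
    ∀ l₀ ∈ Set.Ioo (0 : ℝ) (4 / h ^ 2),
      Tendsto (fun l : ℝ => ∑' p : ℤ × ℤ, ‖Gker h ν l p - Gker h ν l₀ p‖ ^ 2)
        (nhdsWithin l₀ (Set.Ioo (0 : ℝ) (4 / h ^ 2))) (nhds 0) := by
  set w : ℤ → ℝ := fun n => (1 + (n:ℝ)^2) ^ (-(ν/2)) with hw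
  have hwnn : ∀ n : ℤ, 0 ≤ w n := fun n => Real.rpow_nonneg (by positivity) _
  have hws : Summable w := summable_w hν
  have hwprod : Summable fun p : ℤ × ℤ => w p.1 * w p.2 :=
    hws.mul_of_nonneg hws hwnn hwnn
  constructor
  · rintro l ⟨hl, hl2⟩
    have hC : (0:ℝ) < l * (4/h^2 - l) := mul_pos hl (by linarith)
    have hkey : (fun p : ℤ × ℤ => ‖Gker h ν l p‖ ^ 2) =
        fun p : ℤ × ℤ => w p.1 * w p.2 / (l * (4/h^2 - l)) := by
      funext p; exact norm_Gker_sq h ν l hl hl2 p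
    have hs : Summable (fun p : ℤ × ℤ => ‖Gker h ν l p‖ ^ 2) := by
      rw [hkey]; exact hwprod.div_const _
    refine ⟨hs, ?_⟩
    have hsq : (∑' n, w n) ^ 2 = ∑' p : ℤ × ℤ, w p.1 * w p.2 := by
      rw [sq]; exact Summable.tsum_mul_tsum hws hws hwprod
    rw [hkey, tsum_div_const, hsq]
  · rintro l₀ ⟨hl₀, hl₀2⟩
    have hcont : ∀ p : ℤ × ℤ,
        Tendsto (fun l => ‖Gker h ν l p - Gker h ν l₀ p‖ ^ 2)
          (nhdsWithin l₀ (Set.Ioo (0:ℝ) (4/h^2))) (nhds 0) := by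
      intro p
      have hne : ((Real.sqrt l₀ : ℝ) : ℂ) * ((Real.sqrt (4/h^2 - l₀) : ℝ) : ℂ) ≠ 0 := by
        simp only [ne_eq, mul_eq_zero, Complex.ofReal_eq_zero, not_or]
        exact ⟨Real.sqrt_ne_zero'.mpr hl₀, Real.sqrt_ne_zero'.mpr (by linarith)⟩
      have hc : ContinuousWithinAt (fun l => Gker h ν l p)
          (Set.Ioo (0:ℝ) (4/h^2)) l₀ := by
        unfold Gker
        apply ContinuousWithinAt.mul continuousWithinAt_const
        apply ContinuousWithinAt.div
        · apply ContinuousWithinAt.mul continuousWithinAt_const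
          apply Complex.continuous_exp.continuousAt.comp_continuousWithinAt
          apply ContinuousWithinAt.mul continuousWithinAt_const
          apply Complex.continuous_ofReal.continuousAt.comp_continuousWithinAt
          exact (Real.continuous_arcsin.comp
            (continuous_const.mul Real.continuous_sqrt)).continuousWithinAt
        · exact ((Complex.continuous_ofReal.comp Real.continuous_sqrt).mul
            (Complex.continuous_ofReal.comp
              (Real.continuous_sqrt.comp (continuous_const.sub continuous_id)))).continuousWithinAt
        · exact hne
      have h0 : Tendsto (fun l => ‖Gker h ν l p - Gker h ν l₀ p‖ ^ 2)
          (nhdsWithin l₀ (Set.Ioo (0:ℝ) (4/h^2)))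
          (nhds (‖Gker h ν l₀ p - Gker h ν l₀ p‖ ^ 2)) :=
        ((hc.sub continuousWithinAt_const).norm).pow 2
      simpa using h0
    have hbd : ∀ᶠ l in nhdsWithin l₀ (Set.Ioo (0:ℝ) (4/h^2)),
        ∀ p : ℤ × ℤ, ‖‖Gker h ν l p - Gker h ν l₀ p‖ ^ 2‖ ≤
          4 / (l₀/2 * ((4/h^2 - l₀)/2)) * (w p.1 * w p.2) := by
      have hmem : Set.Ioo (l₀/2) ((l₀ + 4/h^2)/2) ∈ nhdsWithin l₀ (Set.Ioo (0:ℝ) (4/h^2)) :=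
        nhdsWithin_le_nhds (Ioo_mem_nhds (by linarith) (by linarith))
      filter_upwards [hmem, self_mem_nhdsWithin] with l hlu hls p
      obtain ⟨hlu1, hlu2⟩ := hlu
      obtain ⟨hls1, hls2⟩ := hls
      have ha : (0:ℝ) < l₀/2 := by linarith
      have hb : (0:ℝ) < (4/h^2 - l₀)/2 := by linarith
      have hsab : (0:ℝ) < Real.sqrt (l₀/2) * Real.sqrt ((4/h^2 - l₀)/2) :=
        mul_pos (Real.sqrt_pos.mpr ha) (Real.sqrt_pos.mpr hb)
      have hA1 : (0:ℝ) ≤ (1 + (p.1:ℝ)^2) ^ (-(ν/4)) := Real.rpow_nonneg (by positivity) _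
      have hA2 : (0:ℝ) ≤ (1 + (p.2:ℝ)^2) ^ (-(ν/4)) := Real.rpow_nonneg (by positivity) _
      set A := (1 + (p.1:ℝ)^2) ^ (-(ν/4)) * (1 + (p.2:ℝ)^2) ^ (-(ν/4)) with hA
      have hAnn : 0 ≤ A := mul_nonneg hA1 hA2
      have hbound : ∀ x : ℝ, l₀/2 ≤ x → x < 4/h^2 - (4/h^2 - l₀)/2 + (4/h^2 - l₀)/2 →
          (4/h^2 - l₀)/2 ≤ 4/h^2 - x →
          ‖Gker h ν x p‖ ≤ A / (Real.sqrt (l₀/2) * Real.sqrt ((4/h^2 - l₀)/2)) := by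
        intro x hx1 _ hx2
        rw [norm_Gker]
        gcongr <;> exact Real.sqrt_le_sqrt (by linarith)
      have hGl : ‖Gker h ν l p‖ ≤ A / (Real.sqrt (l₀/2) * Real.sqrt ((4/h^2 - l₀)/2)) :=
        hbound l (by linarith) (by linarith) (by linarith)
      have hGl₀ : ‖Gker h ν l₀ p‖ ≤ A / (Real.sqrt (l₀/2) * Real.sqrt ((4/h^2 - l₀)/2)) :=
        hbound l₀ (by linarith) (by linarith) (by linarith)
      have htri : ‖Gker h ν l p - Gker h ν l₀ p‖ ≤
          2 * (A / (Real.sqrt (l₀/2) * Real.sqrt ((4/h^2 - l₀)/2))) := by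
        calc ‖Gker h ν l p - Gker h ν l₀ p‖ ≤ ‖Gker h ν l p‖ + ‖Gker h ν l₀ p‖ :=
              norm_sub_le _ _
          _ ≤ _ := by linarith
      rw [Real.norm_eq_abs, abs_of_nonneg (by positivity)]
      calc ‖Gker h ν l p - Gker h ν l₀ p‖ ^ 2
          ≤ (2 * (A / (Real.sqrt (l₀/2) * Real.sqrt ((4/h^2 - l₀)/2)))) ^ 2 := by
            apply pow_le_pow_left₀ (norm_nonneg _) htri
        _ = 4 / (l₀/2 * ((4/h^2 - l₀)/2)) * (w p.1 * w p.2) := by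
            have e1 : (Real.sqrt (l₀/2) * Real.sqrt ((4/h^2 - l₀)/2)) ^ 2 =
                l₀/2 * ((4/h^2 - l₀)/2) := by
              rw [mul_pow, Real.sq_sqrt ha.le, Real.sq_sqrt hb.le]
            rw [mul_pow, div_pow, e1, hA, mul_pow,
              wsq_sq ν _ (by positivity), wsq_sq ν _ (by positivity)]
            simp only [hw]
            ring
    have hsum : Summable fun p : ℤ × ℤ =>
        4 / (l₀/2 * ((4/h^2 - l₀)/2)) * (w p.1 * w p.2) := hwprod.mul_left _
    have := tendsto_tsum_of_dominated_convergence hsum hcont hbd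
    simpa using this
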